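/- The complete elliptic integral of the first kind at parameter m = 1/2 satisfies K[1/2] = ∫₀¹ dτ / (√(1−τ²) · √(1 − τ²/2)) = Γ(1/4)² / (4√π). -/

import Mathlib

open MeasureTheory Set

noncomputable def fsub : ℝ → ℝ := fun x => Real.sqrt (1 - Real.sqrt x)
noncomputable def fsub' : ℝ → ℝ := fun x => -(1 / (4 * Real.sqrt x * Real.sqrt (1 - Real.sqrt x)))

lemma fsub_deriv {x : ℝ} (hx : x ∈ Ioo (0:ℝ) 1) :
    HasDerivAt fsub (fsub' x) x := by
  obtain ⟨hx0, hx1⟩ := hx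
  have hs0 : 0 < Real.sqrt x := Real.sqrt_pos.mpr hx0
  have hs1 : Real.sqrt x < 1 := by
    rw [show (1:ℝ) = Real.sqrt 1 by simp]; exact Real.sqrt_lt_sqrt hx0.le hx1
  have h1 : HasDerivAt (fun y => 1 - Real.sqrt y) (-(1 / (2 * Real.sqrt x))) x :=
    (Real.hasDerivAt_sqrt hx0.ne').const_sub 1
  have h2 : HasDerivAt Real.sqrt (1 / (2 * Real.sqrt (1 - Real.sqrt x))) (1 - Real.sqrt x) :=
    Real.hasDerivAt_sqrt (by linarith)
  have := h2.comp x h1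
  refine (this : HasDerivAt fsub _ x).congr_deriv ?_
  have h3 : 0 < Real.sqrt (1 - Real.sqrt x) := Real.sqrt_pos.mpr (by linarith)
  unfold fsub'
  field_simp
  ring

lemma fsub_image : fsub '' Ioo (0:ℝ) 1 = Ioo (0:ℝ) 1 := by
  ext τ
  constructor
  · rintro ⟨x, ⟨hx0, hx1⟩, rfl⟩
    have hs0 : 0 < Real.sqrt x := Real.sqrt_pos.mpr hx0
    have hs1 : Real.sqrt x < 1 := by
      rw [show (1:ℝ) = Real.sqrt 1 by simp]; exact Real.sqrt_lt_sqrt hx0.le hx1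
    constructor
    · exact Real.sqrt_pos.mpr (by linarith)
    · rw [show (1:ℝ) = Real.sqrt 1 by simp]
      exact Real.sqrt_lt_sqrt (by linarith) (by linarith)
  · rintro ⟨hτ0, hτ1⟩
    have h1 : 0 < 1 - τ^2 := by nlinarith
    refine ⟨(1 - τ^2)^2, ⟨by positivity, by nlinarith⟩, ?_⟩
    simp only [fsub]
    rw [Real.sqrt_sq h1.le]
    rw [show 1 - (1 - τ^2) = τ^2 by ring, Real.sqrt_sq hτ0.le]

lemma fsub_inj : InjOn fsub (Ioo (0:ℝ) 1) := by
  intro x hx y hy h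
  have hsx : Real.sqrt x < 1 := by
    rw [show (1:ℝ) = Real.sqrt 1 by simp]; exact Real.sqrt_lt_sqrt hx.1.le hx.2
  have hsy : Real.sqrt y < 1 := by
    rw [show (1:ℝ) = Real.sqrt 1 by simp]; exact Real.sqrt_lt_sqrt hy.1.le hy.2
  have h2 : 1 - Real.sqrt x = 1 - Real.sqrt y :=
    (Real.sqrt_inj (by linarith) (by linarith)).mp h
  exact (Real.sqrt_inj hx.1.le hy.1.le).mp (by linarith)

lemma fsub_pointwise {x : ℝ} (hx : x ∈ Ioo (0:ℝ) 1) :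
    |fsub' x| * (1 / (Real.sqrt (1 - fsub x ^ 2) * Real.sqrt (1 - fsub x ^ 2 / 2))) =
      Real.sqrt 2 / 4 * (x ^ (-(3/4) : ℝ) * (1-x) ^ (-(1/2) : ℝ)) := by
  obtain ⟨hx0, hx1⟩ := hx
  set s := Real.sqrt x with hs
  have hs0 : 0 < s := Real.sqrt_pos.mpr hx0
  have hs1 : s < 1 := by
    rw [hs, show (1:ℝ) = Real.sqrt 1 by simp]; exact Real.sqrt_lt_sqrt hx0.le hx1
  have hs2 : s ^ 2 = x := Real.sq_sqrt hx0.le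
  have hf2 : fsub x ^ 2 = 1 - s := Real.sq_sqrt (by linarith)
  rw [hf2]
  have e1 : 1 - (1 - s) = s := by ring
  have e2 : 1 - (1 - s) / 2 = (1 + s) / 2 := by ring
  rw [e1, e2]
  have e3 : Real.sqrt ((1 + s) / 2) = Real.sqrt (1 + s) / Real.sqrt 2 := by
    exact Real.sqrt_div (by linarith) 2
  have e4 : Real.sqrt (1 - x) = Real.sqrt (1 - s) * Real.sqrt (1 + s) := by
    rw [show 1 - x = (1 - s) * (1 + s) by nlinarith, Real.sqrt_mul (by linarith)]
  have e5 : x ^ (-(3/4) : ℝ) = 1 / (s * Real.sqrt s) := by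
    have : s * Real.sqrt s = x ^ ((3:ℝ)/4) := by
      rw [hs, Real.sqrt_eq_rpow x, Real.sqrt_eq_rpow (x ^ ((1:ℝ)/2)),
        ← Real.rpow_mul hx0.le, ← Real.rpow_add hx0]
      norm_num
    rw [Real.rpow_neg hx0.le, this, one_div]
  have e6 : (1-x) ^ (-(1/2) : ℝ) = 1 / Real.sqrt (1 - x) := by
    rw [Real.rpow_neg (by linarith : (0:ℝ) ≤ 1 - x), Real.sqrt_eq_rpow]
    norm_num
  have habs : |fsub' x| = 1 / (4 * s * Real.sqrt (1 - s)) := by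
    have h3 : 0 < Real.sqrt (1 - Real.sqrt x) := Real.sqrt_pos.mpr (by rw [← hs]; linarith)
    rw [fsub', abs_neg, abs_of_pos (div_pos one_pos (by rw [← hs]; positivity))]
  rw [habs, e3, e5, e6, e4]
  have p1 : 0 < Real.sqrt (1 - s) := Real.sqrt_pos.mpr (by linarith)
  have p2 : 0 < Real.sqrt (1 + s) := Real.sqrt_pos.mpr (by linarith)
  have p3 : 0 < Real.sqrt s := Real.sqrt_pos.mpr hs0
  have p4 : 0 < Real.sqrt 2 := by positivity
  field_simp

open MeasureTheory Set

lemma beta_val : ∫ x in (0:ℝ)..1, x ^ (-(3/4) : ℝ) * (1-x) ^ (-(1/2) : ℝ) =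
    Real.Gamma (1/4) * Real.Gamma (1/2) / Real.Gamma (3/4) := by
  have h := Complex.Gamma_mul_Gamma_eq_betaIntegral (s := 1/4) (t := 1/2)
    (by norm_num) (by norm_num)
  have h2 : Complex.betaIntegral (1/4) (1/2) =
      ((∫ x in (0:ℝ)..1, x ^ (-(3/4) : ℝ) * (1-x) ^ (-(1/2) : ℝ) : ℝ) : ℂ) := by
    rw [Complex.betaIntegral, ← intervalIntegral.integral_ofReal]
    apply intervalIntegral.integral_congr
    intro x hx
    rw [Set.uIcc_of_le (by norm_num : (0:ℝ) ≤ 1)] at hx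
    have hx0 : (0:ℝ) ≤ x := hx.1
    have hx1 : (0:ℝ) ≤ 1 - x := by linarith [hx.2]
    push_cast
    rw [Complex.ofReal_cpow hx0, Complex.ofReal_cpow hx1]
    norm_num
  rw [h2, show (1/4:ℂ) = ((1/4:ℝ):ℂ) by norm_num,
    show (1/2:ℂ) = ((1/2:ℝ):ℂ) by norm_num,
    show ((1/4:ℝ):ℂ) + ((1/2:ℝ):ℂ) = ((3/4:ℝ):ℂ) by norm_num,
    Complex.Gamma_ofReal, Complex.Gamma_ofReal, Complex.Gamma_ofReal] at h
  have h' : Real.Gamma (1/4) * Real.Gamma (1/2) =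
      Real.Gamma (3/4) * ∫ x in (0:ℝ)..1, x ^ (-(3/4) : ℝ) * (1-x) ^ (-(1/2) : ℝ) := by
    exact_mod_cast h
  have hne : Real.Gamma (3/4) ≠ 0 := (Real.Gamma_pos_of_pos (by norm_num)).ne'
  field_simp [h']
  rw [h']; ring

/-- The complete elliptic integral of the first kind with parameter `m = 1/2`:
`K[1/2] = ∫₀¹ dτ/(√(1−τ²)·√(1−τ²/2)) = Γ(1/4)²/(4√π)`. -/
theorem ellipticK_half :
    ∫ τ in (0:ℝ)..1, 1 / (Real.sqrt (1 - τ ^ 2) * Real.sqrt (1 - τ ^ 2 / 2)) =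
      Real.Gamma (1 / 4) ^ 2 / (4 * Real.sqrt Real.pi) := by
  have key : (∫ τ in (0:ℝ)..1, 1 / (Real.sqrt (1 - τ ^ 2) * Real.sqrt (1 - τ ^ 2 / 2)))
      = Real.sqrt 2 / 4 * ∫ x in (0:ℝ)..1, x ^ (-(3/4):ℝ) * (1-x) ^ (-(1/2):ℝ) := by
    rw [intervalIntegral.integral_of_le zero_le_one, integral_Ioc_eq_integral_Ioo,
      ← fsub_image, integral_image_eq_integral_abs_deriv_smul measurableSet_Ioo
        (fun x hx => (fsub_deriv hx).hasDerivWithinAt) fsub_inj]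
    rw [intervalIntegral.integral_of_le zero_le_one, integral_Ioc_eq_integral_Ioo,
      ← integral_const_mul]
    apply setIntegral_congr_fun measurableSet_Ioo
    intro x hx
    simpa [smul_eq_mul] using fsub_pointwise hx
  rw [key, beta_val, Real.Gamma_one_half_eq]
  have hrefl := Real.Gamma_mul_Gamma_one_sub (1/4)
  rw [show (1:ℝ) - 1/4 = 3/4 by norm_num,
    show Real.pi * (1/4) = Real.pi / 4 by ring, Real.sin_pi_div_four] at hrefl
  have hG4 : 0 < Real.Gamma (1/4) := Real.Gamma_pos_of_pos (by norm_num)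
  have hG34 : 0 < Real.Gamma (3/4) := Real.Gamma_pos_of_pos (by norm_num)
  have hπ : Real.sqrt Real.pi * Real.sqrt Real.pi = Real.pi :=
    Real.mul_self_sqrt Real.pi_pos.le
  have h2 : Real.sqrt 2 * Real.sqrt 2 = 2 := Real.mul_self_sqrt (by norm_num)
  have hsπ : 0 < Real.sqrt Real.pi := Real.sqrt_pos.mpr Real.pi_pos
  have hs2 : 0 < Real.sqrt 2 := by positivity
  have hG34eq : Real.Gamma (3/4) = Real.sqrt 2 * Real.pi / Real.Gamma (1/4) := by
    field_simp at hrefl ⊢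
    nlinarith [hrefl, h2]
  rw [hG34eq]
  field_simp
  linear_combination hπ
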